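/- Let U ⊆ ℝ² be open and η : U → ℝ³ be twice continuously differentiable, with induced metric g_{ij}(y) = ⟨∂_iη(y), ∂_jη(y)⟩ satisfying det(g_{ij}(y)) > 0 for all y ∈ U; write g^{ij} for the inverse entries and g = det(g_{ij}). Then at every point of U and for every k ∈ {1,2}: Σ_{i=1}^{2} ∂_i( √g · g^{ik} ) = − √g Σ_{i,j,l=1}^{2} g^{ij} g^{kl} ⟨∂²_{ij}η, ∂_lη⟩. -/

import Mathlib

open Matrix

/-- The vector of partial derivatives `∂_i η(y) ∈ ℝ³` of a map `η : ℝ² → ℝ³`. -/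
noncomputable def pdEmb (η : (Fin 2 → ℝ) → Fin 3 → ℝ) (i : Fin 2)
    (y : Fin 2 → ℝ) : Fin 3 → ℝ :=
  fderiv ℝ η y (Pi.single i 1)

/-- The second partial derivatives `∂²_{ij} η(y) ∈ ℝ³` of a map `η : ℝ² → ℝ³`. -/
noncomputable def pd2Emb (η : (Fin 2 → ℝ) → Fin 3 → ℝ) (i j : Fin 2)
    (y : Fin 2 → ℝ) : Fin 3 → ℝ :=
  fderiv ℝ (fun z => fderiv ℝ η z (Pi.single j 1)) y (Pi.single i 1)

/-- The induced metric `g_{ij}(y) = ⟨∂_i η(y), ∂_j η(y)⟩`. -/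
noncomputable def inducedMetric (η : (Fin 2 → ℝ) → Fin 3 → ℝ)
    (y : Fin 2 → ℝ) : Matrix (Fin 2) (Fin 2) ℝ :=
  Matrix.of fun i j => ∑ a, pdEmb η i y a * pdEmb η j y a

-- helper: derivative of u * (sqrt ∘ D)⁻¹
lemma hasFDerivAt_mul_inv_sqrt {u D : (Fin 2 → ℝ) → ℝ} {u' D' : (Fin 2 → ℝ) →L[ℝ] ℝ}
    {y : Fin 2 → ℝ} (hu : HasFDerivAt u u' y) (hD : HasFDerivAt D D' y) (hpos : 0 < D y) :
    HasFDerivAt (fun z => u z * (Real.sqrt (D z))⁻¹)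
      ((Real.sqrt (D y))⁻¹ • u' + (-(u y) / (2 * D y * Real.sqrt (D y))) • D') y := by
  have hs : HasFDerivAt (fun z => Real.sqrt (D z)) ((1 / (2 * Real.sqrt (D y))) • D') y :=
    hD.sqrt (ne_of_gt hpos)
  have hsp : 0 < Real.sqrt (D y) := Real.sqrt_pos.mpr hpos
  have hsi : HasFDerivAt (fun z => (Real.sqrt (D z))⁻¹)
      ((-((Real.sqrt (D y)) ^ 2)⁻¹) • ((1 / (2 * Real.sqrt (D y))) • D')) y :=
    (hasDerivAt_inv (ne_of_gt hsp)).comp_hasFDerivAt y hs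
  have h := hu.mul hsi
  refine h.congr_fderiv ?_
  ext w
  have h2 : Real.sqrt (D y) * Real.sqrt (D y) = D y := Real.mul_self_sqrt hpos.le
  simp only [ContinuousLinearMap.add_apply, ContinuousLinearMap.smul_apply, smul_eq_mul]
  field_simp
  rw [Real.sq_sqrt hpos.le]
  ring


set_option maxHeartbeats 1600000 in
/-- For a `C²` embedding `η : U ⊆ ℝ² → ℝ³` with induced metric `g` of positive
determinant, `Σ_i ∂_i(√g g^{ik}) = −√g Σ_{i,j,l} g^{ij} g^{kl} ⟨∂²_{ij}η, ∂_lη⟩`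
(identity (EQ57) of the paper). -/
theorem div_sqrtDet_inverse_metric (U : Set (Fin 2 → ℝ)) (hU : IsOpen U)
    (η : (Fin 2 → ℝ) → Fin 3 → ℝ) (hη : ContDiffOn ℝ 2 η U)
    (hgdet : ∀ y ∈ U, 0 < (inducedMetric η y).det)
    (y : Fin 2 → ℝ) (hy : y ∈ U) (k : Fin 2) :
    ∑ i, fderiv ℝ
        (fun z => Real.sqrt (inducedMetric η z).det * (inducedMetric η z)⁻¹ i k)
        y (Pi.single i 1)
      = - Real.sqrt (inducedMetric η y).det
          * ∑ i, ∑ j, ∑ l, (inducedMetric η y)⁻¹ i j * (inducedMetric η y)⁻¹ k l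
              * ∑ a, pd2Emb η i j y a * pdEmb η l y a := by
  have hC2 : ContDiffAt ℝ 2 η y := hη.contDiffAt (hU.mem_nhds hy)
  have hF2 : DifferentiableAt ℝ (fderiv ℝ η) y :=
    (hC2.fderiv_right (le_refl 2)).differentiableAt one_ne_zero
  set F2 := fderiv ℝ (fderiv ℝ η) y with hF2def
  have hq : ∀ i : Fin 2, HasFDerivAt (pdEmb η i)
      ((ContinuousLinearMap.apply ℝ (Fin 3 → ℝ) (Pi.single i 1)).comp F2) y := by
    intro i
    exact (ContinuousLinearMap.apply ℝ (Fin 3 → ℝ) (Pi.single i 1)).hasFDerivAt.comp y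
      hF2.hasFDerivAt
  have hpd2 : ∀ m i : Fin 2, pd2Emb η m i y = F2 (Pi.single m 1) (Pi.single i 1) := by
    intro m i
    have h := (hq i).fderiv
    calc pd2Emb η m i y = fderiv ℝ (pdEmb η i) y (Pi.single m 1) := rfl
    _ = F2 (Pi.single m 1) (Pi.single i 1) := by rw [h]; rfl
  have hsymm : ∀ m i : Fin 2, pd2Emb η m i y = pd2Emb η i m y := by
    intro m i
    rw [hpd2, hpd2]
    exact hC2.isSymmSndFDerivAt (by simp [minSmoothness_of_isRCLikeNormedField]) _ _
  -- derivative of metric entries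
  have hqc : ∀ (i : Fin 2) (a : Fin 3), HasFDerivAt (fun z => pdEmb η i z a)
      ((ContinuousLinearMap.proj a).comp
        ((ContinuousLinearMap.apply ℝ (Fin 3 → ℝ) (Pi.single i 1)).comp F2)) y := by
    intro i a
    exact (ContinuousLinearMap.proj a).hasFDerivAt.comp y (hq i)
  set LP : Fin 2 → Fin 2 → ((Fin 2 → ℝ) →L[ℝ] ℝ) := fun i j =>
    ∑ a : Fin 3, ((pdEmb η i y a) • ((ContinuousLinearMap.proj a).comp
        ((ContinuousLinearMap.apply ℝ (Fin 3 → ℝ) (Pi.single j 1)).comp F2))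
      + (pdEmb η j y a) • ((ContinuousLinearMap.proj a).comp
        ((ContinuousLinearMap.apply ℝ (Fin 3 → ℝ) (Pi.single i 1)).comp F2))) with hLPdef
  have hP : ∀ i j : Fin 2, HasFDerivAt (fun z => (inducedMetric η z) i j) (LP i j) y := by
    intro i j
    have h : HasFDerivAt (fun z => ∑ a : Fin 3, pdEmb η i z a * pdEmb η j z a) (LP i j) y := by
      refine HasFDerivAt.fun_sum (fun a _ => ?_)
      exact (hqc i a).mul (hqc j a)
    exact h
  set B : Fin 2 → Fin 2 → Fin 2 → ℝ := fun m i j => ∑ a, pd2Emb η m i y a * pdEmb η j y a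
    with hBdef
  have hLP : ∀ i j m : Fin 2, (LP i j) (Pi.single m 1) = B m i j + B m j i := by
    intro i j m
    simp only [hLPdef, hBdef, ContinuousLinearMap.sum_apply, ContinuousLinearMap.add_apply,
      ContinuousLinearMap.smul_apply, ContinuousLinearMap.comp_apply,
      ContinuousLinearMap.apply_apply, ContinuousLinearMap.proj_apply, smul_eq_mul,
      Finset.sum_add_distrib, hpd2]
    rw [add_comm]
    congr 1 <;> exact Finset.sum_congr rfl (fun a _ => mul_comm _ _)
  -- determinant derivative
  set LD : (Fin 2 → ℝ) →L[ℝ] ℝ :=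
    ((inducedMetric η y) 0 0 • LP 1 1 + (inducedMetric η y) 1 1 • LP 0 0)
      - ((inducedMetric η y) 0 1 • LP 1 0 + (inducedMetric η y) 1 0 • LP 0 1) with hLDdef
  have hD : HasFDerivAt (fun z => (inducedMetric η z).det) LD y := by
    have h := ((hP 0 0).fun_mul (hP 1 1)).fun_sub ((hP 0 1).fun_mul (hP 1 0))
    simpa only [Matrix.det_fin_two] using h
  -- inverse entries
  have hinv : ∀ z ∈ U, ∀ i j : Fin 2, (inducedMetric η z)⁻¹ i j =
      (-1 : ℝ) ^ ((i : ℕ) + (j : ℕ)) * (inducedMetric η z) (i + 1) (j + 1)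
        / (inducedMetric η z).det := by
    intro z hz i j
    have hsym : (inducedMetric η z) 0 1 = (inducedMetric η z) 1 0 := by
      show (∑ a, pdEmb η 0 z a * pdEmb η 1 z a) = ∑ a, pdEmb η 1 z a * pdEmb η 0 z a
      exact Finset.sum_congr rfl fun a _ => mul_comm _ _
    rw [Matrix.inv_def, Matrix.adjugate_fin_two, Ring.inverse_eq_inv]
    fin_cases i <;> fin_cases j <;>
      simp [Matrix.smul_apply, smul_eq_mul, div_eq_mul_inv, hsym] <;> ring
  -- eventual equality and derivative of the summand
  have hfder : ∀ i : Fin 2,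
      fderiv ℝ (fun z => Real.sqrt (inducedMetric η z).det * (inducedMetric η z)⁻¹ i k)
        y (Pi.single i 1)
      = ((Real.sqrt ((inducedMetric η y).det))⁻¹ •
            ((-1 : ℝ) ^ ((i : ℕ) + (k : ℕ)) • LP (i + 1) (k + 1))
          + ((-(((-1 : ℝ) ^ ((i : ℕ) + (k : ℕ)) * (inducedMetric η y) (i + 1) (k + 1)))
              / (2 * (inducedMetric η y).det * Real.sqrt ((inducedMetric η y).det))) • LD))
          (Pi.single i 1) := by
    intro i
    have hEq : (fun z => Real.sqrt (inducedMetric η z).det * (inducedMetric η z)⁻¹ i k)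
        =ᶠ[nhds y] (fun z => ((-1 : ℝ) ^ ((i : ℕ) + (k : ℕ)) * (inducedMetric η z) (i + 1) (k + 1))
          * (Real.sqrt (inducedMetric η z).det)⁻¹) := by
      filter_upwards [hU.mem_nhds hy] with z hz
      have hd := hgdet z hz
      have h2 : Real.sqrt (inducedMetric η z).det * Real.sqrt (inducedMetric η z).det
          = (inducedMetric η z).det := Real.mul_self_sqrt hd.le
      have hsne : Real.sqrt (inducedMetric η z).det ≠ 0 :=
        ne_of_gt (Real.sqrt_pos.mpr hd)
      rw [hinv z hz i k]
      field_simp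
      linear_combination (inducedMetric η z) (i + 1) (k + 1) * h2
    rw [hEq.fderiv_eq]
    have hu : HasFDerivAt (fun z => (-1 : ℝ) ^ ((i : ℕ) + (k : ℕ)) * (inducedMetric η z) (i + 1) (k + 1))
        ((-1 : ℝ) ^ ((i : ℕ) + (k : ℕ)) • LP (i + 1) (k + 1)) y :=
      (hP (i + 1) (k + 1)).const_mul _
    rw [(hasFDerivAt_mul_inv_sqrt hu hD (hgdet y hy)).fderiv]
  -- symmetry facts
  have hP10 : (inducedMetric η y) 1 0 = (inducedMetric η y) 0 1 := by
    show (∑ a, pdEmb η 1 y a * pdEmb η 0 y a) = ∑ a, pdEmb η 0 y a * pdEmb η 1 y a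
    exact Finset.sum_congr rfl fun a _ => mul_comm _ _
  have hB10 : ∀ j : Fin 2, B 1 0 j = B 0 1 j := by
    intro j
    simp only [hBdef]
    exact Finset.sum_congr rfl fun a _ => by rw [hsymm 1 0]
  have hBval : ∀ m i j : Fin 2,
      (∑ a, pd2Emb η m i y a * pdEmb η j y a) = B m i j := fun _ _ _ => rfl
  have hdy := hgdet y hy
  have hs2 : Real.sqrt ((inducedMetric η y).det) * Real.sqrt ((inducedMetric η y).det)
      = (inducedMetric η y).det := Real.mul_self_sqrt hdy.le
  have hsne : Real.sqrt ((inducedMetric η y).det) ≠ 0 := ne_of_gt (Real.sqrt_pos.mpr hdy)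
  have hP00nonneg : 0 ≤ (inducedMetric η y) 0 0 := by
    show 0 ≤ ∑ a, pdEmb η 0 y a * pdEmb η 0 y a
    exact Finset.sum_nonneg fun a _ => mul_self_nonneg _
  have hdet2 : (inducedMetric η y).det
      = (inducedMetric η y) 0 0 * (inducedMetric η y) 1 1
        - (inducedMetric η y) 0 1 * (inducedMetric η y) 0 1 := by
    rw [Matrix.det_fin_two, hP10]
  have hP00pos : 0 < (inducedMetric η y) 0 0 := by
    rcases lt_or_eq_of_le hP00nonneg with h | h
    · exact h
    · exfalso
      rw [hdet2, ← h] at hdy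
      nlinarith [sq_nonneg ((inducedMetric η y) 0 1)]
  have hP00ne : (inducedMetric η y) 0 0 ≠ 0 := ne_of_gt hP00pos
  -- final computation
  have hfder0 := hfder 0
  have hfder1 := hfder 1
  simp only [show ((0 : Fin 2) + 1) = 1 by decide, show ((1 : Fin 2) + 1) = 0 by decide]
    at hfder0 hfder1
  rw [Fin.sum_univ_two, hfder0, hfder1]
  simp only [ContinuousLinearMap.add_apply, ContinuousLinearMap.smul_apply,
    ContinuousLinearMap.sub_apply, hLDdef, hLP, smul_eq_mul]
  simp only [hinv y hy, Fin.sum_univ_two, hBval]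
  simp only [show ((0 : Fin 2) + 1) = 1 by decide, show ((1 : Fin 2) + 1) = 0 by decide]
  simp only [hdet2, hP10, hB10]
  fin_cases k <;>
  · simp only [Fin.val_zero, Fin.val_one, Fin.isValue]
    norm_num
    simp only [show (2 : Fin 2) = 0 by decide, show (1 + 1 : Fin 2) = 0 by decide, hP10, hB10]
    set p00 := inducedMetric η y 0 0 with hp00
    set p01 := inducedMetric η y 0 1 with hp01
    set p11 := inducedMetric η y 1 1 with hp11
    set s := Real.sqrt (p00 * p11 - p01 * p01) with hsdef
    have hdp : (0 : ℝ) < p00 * p11 - p01 * p01 := by rw [← hdet2]; exact hdy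
    have hss : s * s = p00 * p11 - p01 * p01 := by rw [hsdef]; exact Real.mul_self_sqrt hdp.le
    have hsne' : s ≠ 0 := by rw [hsdef]; exact ne_of_gt (Real.sqrt_pos.mpr hdp)
    have hp11eq : p11 = (s * s + p01 * p01) / p00 := by field_simp; linarith [hss]
    rw [hp11eq]
    field_simp
    ring
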